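/- Let Φ be the non-selective measurement channel associated with a complete family of pairwise orthogonal projections {P_a} on ℂ^n, let ρ be a quantum state on ℂ^n, and let d ≥ 1. Then ‖ρ ⊗ E₀₀ − ρ ⊗ (1_d/d)‖₁ = 2(d−1)/d, and the change in trace-distance conditional information satisfies ‖ρ ⊗ E₀₀ − Φ(ρ) ⊗ (1_d/d)‖₁ − ‖ρ ⊗ E₀₀ − ρ ⊗ (1_d/d)‖₁ = ‖ρ − Φ(ρ)/d‖₁ − (d−1)/d. -/

import Mathlib

open Matrix Kronecker
open scoped ComplexOrder

noncomputable section

variable {n : Type*} [Fintype n] [DecidableEq n]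

/-- `|X| = (X† X)^{1/2}`, the positive semidefinite absolute value of a matrix. -/
def matAbs (X : Matrix n n ℂ) : Matrix n n ℂ :=
  ((Matrix.posSemidef_conjTranspose_mul_self X).1.eigenvectorUnitary : Matrix n n ℂ) *
    Matrix.diagonal ((↑) ∘ (√·) ∘ (Matrix.posSemidef_conjTranspose_mul_self X).1.eigenvalues) *
    (star (Matrix.posSemidef_conjTranspose_mul_self X).1.eigenvectorUnitary : Matrix n n ℂ)

/-- `Tr |X|^p`, with the `p`-th power taken through the functional calculus. -/
def traceAbsPow (p : ℝ) (X : Matrix n n ℂ) : ℝ :=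
  (Matrix.trace (cfc (fun x : ℝ => x ^ p) (matAbs X))).re

/-- The Schatten `p`-norm `‖X‖_p = (Tr |X|^p)^(1/p)`. -/
def schatten (p : ℝ) (X : Matrix n n ℂ) : ℝ :=
  (traceAbsPow p X) ^ (1 / p)

/-- Matrix square root via the functional calculus (agrees with the positive semidefinite
square root on positive semidefinite matrices). -/
def msqrt (X : Matrix n n ℂ) : Matrix n n ℂ := cfc Real.sqrt X

/-- Matrix natural logarithm via the functional calculus. -/
def mlog (X : Matrix n n ℂ) : Matrix n n ℂ := cfc Real.log X

/-- Von Neumann entropy `S(ρ) = -Tr(ρ log ρ)`. -/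
def vnEntropy (ρ : Matrix n n ℂ) : ℝ := -(Matrix.trace (ρ * mlog ρ)).re

/-- Relative entropy `S(ρ‖σ) = Tr(ρ log ρ) - Tr(ρ log σ)`. -/
def relEnt (ρ σ : Matrix n n ℂ) : ℝ :=
  (Matrix.trace (ρ * mlog ρ)).re - (Matrix.trace (ρ * mlog σ)).re

/-- Uhlmann fidelity `F(ρ,σ) = (Tr|√σ √ρ|)²`. -/
def fidelity (ρ σ : Matrix n n ℂ) : ℝ :=
  ((Matrix.trace (matAbs (msqrt σ * msqrt ρ))).re) ^ 2

/-- Partial trace over the second factor. -/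
def ptraceE {S E : Type*} [Fintype E] (Ω : Matrix (S × E) (S × E) ℂ) : Matrix S S ℂ :=
  Matrix.of fun s s' => ∑ e, Ω (s, e) (s', e)

/-- Partial trace over the first factor. -/
def ptraceS {S E : Type*} [Fintype S] (Ω : Matrix (S × E) (S × E) ℂ) : Matrix E E ℂ :=
  Matrix.of fun e e' => ∑ s, Ω (s, e) (s, e')

section Aux

variable {m o : Type*} [Fintype m] [DecidableEq m] [Fintype o] [DecidableEq o]

open scoped MatrixOrder

lemma matAbs_eq_sqrt (X : Matrix m m ℂ) : matAbs X = CFC.sqrt (Xᴴ * X) := by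
  have hA := Matrix.posSemidef_conjTranspose_mul_self X
  rw [CFC.sqrt_eq_cfc, cfc_nnreal_eq_real _ (Xᴴ * X), hA.1.cfc_eq, IsHermitian.cfc,
    Unitary.conjStarAlgAut_apply, matAbs]
  congr 3
  funext i
  simp [Real.coe_sqrt, Real.coe_toNNReal', max_eq_left (hA.eigenvalues_nonneg i)]

lemma matAbs_eq {X B : Matrix m m ℂ} (hB : B.PosSemidef) (h : B * B = Xᴴ * X) :
    matAbs X = B := by
  rw [matAbs_eq_sqrt]
  exact CFC.sqrt_unique h hB.nonneg

lemma matAbs_posSemidef (X : Matrix m m ℂ) : (matAbs X).PosSemidef := by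
  rw [matAbs_eq_sqrt]
  exact (CFC.sqrt_nonneg _).posSemidef

lemma matAbs_mul_self (X : Matrix m m ℂ) : matAbs X * matAbs X = Xᴴ * X := by
  rw [matAbs_eq_sqrt]
  exact CFC.sqrt_mul_sqrt_self _ (Matrix.posSemidef_conjTranspose_mul_self X).nonneg

lemma schatten_one_eq (X : Matrix m m ℂ) : schatten 1 X = (Matrix.trace (matAbs X)).re := by
  have h1 : cfc (fun x : ℝ => x ^ (1:ℝ)) (matAbs X) = matAbs X := by
    simp_rw [Real.rpow_one]
    exact cfc_id' ℝ (matAbs X) (matAbs_posSemidef X).isHermitian.isSelfAdjoint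
  rw [schatten, traceAbsPow, h1, one_div_one, Real.rpow_one]

lemma matAbs_of_posSemidef {X : Matrix m m ℂ} (hX : X.PosSemidef) : matAbs X = X :=
  matAbs_eq hX (by rw [hX.1])

lemma posSemidef_real_smul {M : Matrix m m ℂ} (hM : M.PosSemidef) {r : ℝ} (hr : 0 ≤ r) :
    ((r : ℂ) • M).PosSemidef := by
  constructor
  · show ((r : ℂ) • M)ᴴ = _
    rw [Matrix.conjTranspose_smul, hM.1, Complex.star_def, Complex.conj_ofReal]
  · intro x
    exact (hM.smul (a := (r : ℂ)) (by exact_mod_cast hr)).2 x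

lemma matAbs_real_smul (r : ℝ) (A : Matrix m m ℂ) :
    matAbs ((r : ℂ) • A) = ((|r| : ℝ) : ℂ) • matAbs A := by
  apply matAbs_eq (posSemidef_real_smul (matAbs_posSemidef A) (abs_nonneg r))
  rw [Matrix.conjTranspose_smul, Complex.star_def, Complex.conj_ofReal,
    Matrix.smul_mul, Matrix.mul_smul, smul_smul, Matrix.smul_mul, Matrix.mul_smul,
    smul_smul, matAbs_mul_self]
  congr 1
  rw [← Complex.ofReal_mul, ← Complex.ofReal_mul, abs_mul_abs_self]

lemma posSemidef_blockDiagonal {B : o → Matrix m m ℂ} (h : ∀ k, (B k).PosSemidef) :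
    (Matrix.blockDiagonal B).PosSemidef := by
  have key : Matrix.blockDiagonal B =
      (Matrix.blockDiagonal fun k => CFC.sqrt (B k))ᴴ * Matrix.blockDiagonal fun k => CFC.sqrt (B k) := by
    rw [Matrix.blockDiagonal_conjTranspose, ← Matrix.blockDiagonal_mul]
    exact (congrArg _ (funext fun k => by
      rw [(CFC.sqrt_nonneg (B k)).posSemidef.1, CFC.sqrt_mul_sqrt_self _ (h k).nonneg])).symm
  rw [key]
  exact Matrix.posSemidef_conjTranspose_mul_self _

lemma matAbs_blockDiagonal (B : o → Matrix m m ℂ) :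
    matAbs (Matrix.blockDiagonal B) = Matrix.blockDiagonal fun k => matAbs (B k) := by
  apply matAbs_eq (posSemidef_blockDiagonal fun k => matAbs_posSemidef (B k))
  rw [Matrix.blockDiagonal_conjTranspose, ← Matrix.blockDiagonal_mul,
    ← Matrix.blockDiagonal_mul]
  exact congrArg _ (funext fun k => matAbs_mul_self (B k))

lemma schatten_one_blockDiagonal (B : o → Matrix m m ℂ) :
    schatten 1 (Matrix.blockDiagonal B) = ∑ k, schatten 1 (B k) := by
  simp_rw [schatten_one_eq, matAbs_blockDiagonal, Matrix.trace_blockDiagonal, Complex.re_sum]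

lemma kron_diagonal (A : Matrix m m ℂ) (v : o → ℂ) :
    A ⊗ₖ Matrix.diagonal v = Matrix.blockDiagonal fun k => v k • A := by
  ext ⟨s, e⟩ ⟨s', e'⟩
  rw [Matrix.kroneckerMap_apply, Matrix.blockDiagonal_apply, Matrix.diagonal_apply]
  by_cases h : e = e' <;> simp [h, mul_comm]

end Aux

section Key

set_option linter.unusedSectionVars false

lemma schatten_one_real_smul_posSemidef {m : Type*} [Fintype m] [DecidableEq m]
    {σ : Matrix m m ℂ} (hσ : σ.PosSemidef) (hστ : σ.trace = 1) (r : ℝ) :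
    schatten 1 ((r : ℂ) • σ) = |r| := by
  rw [schatten_one_eq, matAbs_real_smul, matAbs_of_posSemidef hσ, Matrix.trace_smul, hστ,
    smul_eq_mul, mul_one, Complex.ofReal_re]

lemma key_lemma {m : Type*} [Fintype m] [DecidableEq m] (ρ σ : Matrix m m ℂ)
    (hσ : σ.PosSemidef) (hστ : σ.trace = 1) (d : ℕ) (hd : 1 ≤ d) :
    schatten 1 (ρ ⊗ₖ Matrix.single (⟨0, hd⟩ : Fin d) ⟨0, hd⟩ (1 : ℂ)
        - σ ⊗ₖ ((d : ℂ)⁻¹ • (1 : Matrix (Fin d) (Fin d) ℂ)))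
      = schatten 1 (ρ - (d : ℂ)⁻¹ • σ) + ((d : ℝ) - 1) / (d : ℝ) := by
  have hd0 : (0:ℝ) < (d:ℝ) := by exact_mod_cast hd
  set z : Fin d := ⟨0, hd⟩ with hz
  have hE : Matrix.single z z (1:ℂ)
      = Matrix.diagonal (fun e : Fin d => if e = z then (1:ℂ) else 0) := by
    ext i j
    rw [Matrix.single, Matrix.diagonal_apply, Matrix.of_apply]
    by_cases h1 : i = z <;> by_cases h2 : j = z <;> simp_all [eq_comm]
  have hI : ((d:ℂ)⁻¹ • (1 : Matrix (Fin d) (Fin d) ℂ))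
      = Matrix.diagonal (fun _ : Fin d => (d:ℂ)⁻¹) := by
    ext i j
    by_cases h : i = j
    · subst h; simp
    · simp [Matrix.one_apply_ne h, Matrix.diagonal_apply_ne _ h]
  rw [hE, hI, kron_diagonal, kron_diagonal, ← Matrix.blockDiagonal_sub,
    schatten_one_blockDiagonal]
  simp only [Pi.sub_apply]
  have hterm : ∀ e : Fin d, e ≠ z →
      schatten 1 ((if e = z then (1:ℂ) else 0) • ρ - (d:ℂ)⁻¹ • σ) = 1 / (d:ℝ) := by
    intro e he
    rw [if_neg he, zero_smul, zero_sub]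
    have h1 : -((d:ℂ)⁻¹ • σ) = (((-(d:ℝ)⁻¹ : ℝ)) : ℂ) • σ := by
      push_cast
      rw [neg_smul]
    rw [h1, schatten_one_real_smul_posSemidef hσ hστ, abs_neg, abs_inv,
      abs_of_pos hd0, one_div]
  rw [← Finset.add_sum_erase _ _ (Finset.mem_univ z)]
  have h2 : ∑ e ∈ Finset.univ.erase z,
      schatten 1 ((if e = z then (1:ℂ) else 0) • ρ - (d:ℂ)⁻¹ • σ)
      = ((d:ℝ) - 1) / (d:ℝ) := by
    rw [Finset.sum_congr rfl (fun e he => hterm e (Finset.ne_of_mem_erase he)),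
      Finset.sum_const, Finset.card_erase_of_mem (Finset.mem_univ z),
      Finset.card_univ, Fintype.card_fin, nsmul_eq_mul, Nat.cast_sub hd]
    push_cast
    ring
  rw [h2, if_pos rfl, one_smul]

end Key


set_option maxHeartbeats 1000000 in
/-- Trace-distance conditional information: `‖ρ ⊗ E₀₀ - ρ ⊗ 1_d/d‖₁ = 2(d-1)/d` and the
change in conditional information is `‖ρ - Φ(ρ)/d‖₁ - (d-1)/d`. -/
theorem traceDistance_conditional_information
    {n ι : Type*} [Fintype n] [DecidableEq n] [Fintype ι]
    (P : ι → Matrix n n ℂ)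
    (hproj : ∀ a, P a * P a = P a)
    (hherm : ∀ a, (P a)ᴴ = P a)
    (horth : ∀ a b, a ≠ b → P a * P b = 0)
    (hsum : ∑ a, P a = 1)
    (ρ : Matrix n n ℂ) (hρ : ρ.PosSemidef) (htr : ρ.trace = 1)
    (d : ℕ) (hd : 1 ≤ d) :
    schatten 1 (ρ ⊗ₖ Matrix.single (⟨0, hd⟩ : Fin d) ⟨0, hd⟩ (1 : ℂ)
        - ρ ⊗ₖ ((d : ℂ)⁻¹ • (1 : Matrix (Fin d) (Fin d) ℂ)))
      = 2 * ((d : ℝ) - 1) / (d : ℝ) ∧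
    schatten 1 (ρ ⊗ₖ Matrix.single (⟨0, hd⟩ : Fin d) ⟨0, hd⟩ (1 : ℂ)
        - (∑ a, P a * ρ * P a) ⊗ₖ ((d : ℂ)⁻¹ • (1 : Matrix (Fin d) (Fin d) ℂ)))
      - schatten 1 (ρ ⊗ₖ Matrix.single (⟨0, hd⟩ : Fin d) ⟨0, hd⟩ (1 : ℂ)
        - ρ ⊗ₖ ((d : ℂ)⁻¹ • (1 : Matrix (Fin d) (Fin d) ℂ)))
      = schatten 1 (ρ - (d : ℂ)⁻¹ • ∑ a, P a * ρ * P a) - ((d : ℝ) - 1) / (d : ℝ) := by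
  have hd0 : (0:ℝ) < (d:ℝ) := by exact_mod_cast hd
  have hΦpsd : (∑ a, P a * ρ * P a).PosSemidef := by
    apply Finset.sum_induction _ _ (fun A B hA hB => hA.add hB) Matrix.PosSemidef.zero
    intro a _
    simpa [hherm a] using hρ.mul_mul_conjTranspose_same (P a)
  have hΦtr : (∑ a, P a * ρ * P a).trace = 1 := by
    rw [Matrix.trace_sum]
    have h1 : ∀ a, (P a * ρ * P a).trace = (P a * ρ).trace := fun a => by
      rw [Matrix.trace_mul_cycle, hproj a]
    simp_rw [h1]
    rw [← Matrix.trace_sum, ← Finset.sum_mul, hsum, one_mul, htr]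
  have part1 : schatten 1 (ρ ⊗ₖ Matrix.single (⟨0, hd⟩ : Fin d) ⟨0, hd⟩ (1 : ℂ)
      - ρ ⊗ₖ ((d : ℂ)⁻¹ • (1 : Matrix (Fin d) (Fin d) ℂ)))
      = 2 * ((d : ℝ) - 1) / (d : ℝ) := by
    rw [key_lemma ρ ρ hρ htr d hd]
    have h2 : ρ - (d:ℂ)⁻¹ • ρ = (((1 - (d:ℝ)⁻¹ : ℝ)) : ℂ) • ρ := by
      push_cast
      rw [sub_smul, one_smul]
    rw [h2, schatten_one_real_smul_posSemidef hρ htr,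
      abs_of_nonneg (sub_nonneg.mpr (inv_le_one_of_one_le₀ (by exact_mod_cast hd)))]
    field_simp
    ring
  refine ⟨part1, ?_⟩
  rw [part1, key_lemma ρ _ hΦpsd hΦtr d hd]
  ring
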